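/- arXiv:2506.02635 — 5 statements merged into one kernel-verified Lean document; each statement's English description precedes it below -/
import Mathlib

section
/- Let E be a finite-dimensional real inner product space, X ⊆ E a nonempty compact convex set of diameter at most D > 0, and f : E → ℝ a convex differentiable function that is L-smooth on X (L > 0). Let f* = min_{y∈X} f(y), let x ∈ X with primal gap h = f(x) − f*, let v ∈ X minimize y ↦ ⟨∇f(x), y⟩ over X, and let x' = x + γ*(v − x) where γ* minimizes γ ↦ f(x + γ(v − x)) over [0,1]. Then: if h ≤ L D², one has f(x') − f* ≤ h − h²/(2 L D²), and if h > L D², one has f(x') − f* ≤ h/2. -/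
open RealInnerProductSpace

/-- Progress of one exact-line-search Frank-Wolfe step: with primal gap `h = f x - f*`,
the new point `x' = x + γ*(v - x)` (with `γ*` an exact line-search minimizer over `[0,1]`
and `v` a Frank-Wolfe vertex) satisfies `f x' - f* ≤ h - h²/(2LD²)` if `h ≤ LD²`,
and `f x' - f* ≤ h/2` if `h > LD²`. -/
theorem fw_step_progress
    {E : Type*} [NormedAddCommGroup E] [InnerProductSpace ℝ E] [FiniteDimensional ℝ E]
    (X : Set E) (hXne : X.Nonempty) (hXcomp : IsCompact X) (hXconv : Convex ℝ X)
    (D : ℝ) (hD : 0 < D) (hdiam : ∀ p ∈ X, ∀ q ∈ X, ‖p - q‖ ≤ D)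
    (f : E → ℝ) (g : E → E) (L : ℝ) (hL : 0 < L)
    (hconv : ConvexOn ℝ Set.univ f)
    (hdiff : ∀ p : E, HasFDerivAt f ((innerSL ℝ) (g p)) p)
    (hsmooth : ∀ p ∈ X, ∀ q ∈ X, f q - f p ≤ ⟪g p, q - p⟫ + L / 2 * ‖q - p‖ ^ 2)
    (xm : E) (hxm : xm ∈ X) (hxmin : ∀ y ∈ X, f xm ≤ f y)
    (x : E) (hx : x ∈ X)
    (v : E) (hv : v ∈ X) (hvmin : ∀ y ∈ X, ⟪g x, v⟫ ≤ ⟪g x, y⟫)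
    (γ : ℝ) (hγ : γ ∈ Set.Icc (0:ℝ) 1)
    (hγmin : ∀ γ' ∈ Set.Icc (0:ℝ) 1, f (x + γ • (v - x)) ≤ f (x + γ' • (v - x))) :
    (f x - f xm ≤ L * D ^ 2 →
      f (x + γ • (v - x)) - f xm ≤ (f x - f xm) - (f x - f xm) ^ 2 / (2 * L * D ^ 2)) ∧
    (f x - f xm > L * D ^ 2 →
      f (x + γ • (v - x)) - f xm ≤ (f x - f xm) / 2) := by

  set h := f x - f xm with hh
  have hh0 : 0 ≤ h := sub_nonneg.mpr (hxmin x hx)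
  -- gradient inequality: ⟪g x, xm - x⟫ ≤ f xm - f x
  have hgrad : ⟪g x, xm - x⟫ ≤ f xm - f x := by
    set c := xm - x with hc
    set φ : ℝ → ℝ := fun t => f (x + t • c) with hφ
    have hφconv : ConvexOn ℝ Set.univ φ := by
      have := hconv.comp_affineMap (AffineMap.lineMap x xm)
      have heq : φ = f ∘ (AffineMap.lineMap x xm) := by
        funext t
        simp [hφ, AffineMap.lineMap_apply, hc, add_comm]
      rw [heq]
      simpa using this
    have hφd : HasDerivAt φ ⟪g x, c⟫ 0 := by
      have h1 : HasDerivAt (fun t : ℝ => x + t • c) c 0 := by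
        simpa using ((hasDerivAt_id (0:ℝ)).smul_const c).const_add x
      have := (hdiff (x + (0:ℝ) • c)).comp_hasDerivAt 0 h1
      simp at this
      exact this
    have := hφconv.le_slope_of_hasDerivWithinAt (Set.mem_univ 0) (Set.mem_univ 1)
      one_pos hφd.hasDerivWithinAt
    have hs : slope φ 0 1 = f xm - f x := by
      simp [slope_def_field, hφ, hc]
    rw [hs] at this
    exact this
  have hdual : h ≤ ⟪g x, x - v⟫ := by
    have h1 : ⟪g x, v⟫ ≤ ⟪g x, xm⟫ := hvmin xm hxm
    have h2 : ⟪g x, xm - x⟫ ≤ f xm - f x := hgrad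
    rw [inner_sub_right] at h2 ⊢
    rw [hh]
    linarith
  -- key bound for every t ∈ [0,1]
  have key : ∀ t ∈ Set.Icc (0:ℝ) 1,
      f (x + γ • (v - x)) - f xm ≤ h - t * h + L / 2 * t ^ 2 * D ^ 2 := by
    intro t ht
    obtain ⟨ht0, ht1⟩ := ht
    have hz : x + t • (v - x) ∈ X := by
      have := hXconv hx hv (by linarith : (0:ℝ) ≤ 1 - t) ht0 (by ring)
      have heq : (1 - t) • x + t • v = x + t • (v - x) := by
        rw [smul_sub]; module
      rwa [heq] at this
    have hsm := hsmooth x hx _ hz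
    have hzx : x + t • (v - x) - x = t • (v - x) := by abel
    rw [hzx] at hsm
    have hinner : ⟪g x, t • (v - x)⟫ ≤ t * (-h) := by
      rw [real_inner_smul_right]
      have : ⟪g x, v - x⟫ ≤ -h := by
        rw [inner_sub_right]
        rw [inner_sub_right] at hdual
        linarith
      nlinarith
    have hnorm : ‖t • (v - x)‖ ^ 2 ≤ t ^ 2 * D ^ 2 := by
      rw [norm_smul]
      have hvx := hdiam v hv x hx
      have h0 : ‖v - x‖ ≤ D := hvx
      have : ‖t‖ = t := abs_of_nonneg ht0
      rw [this, mul_pow]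
      exact mul_le_mul_of_nonneg_left (pow_le_pow_left₀ (norm_nonneg _) h0 2) (sq_nonneg t)
    have hstep : f (x + t • (v - x)) - f x ≤ t * (-h) + L / 2 * (t ^ 2 * D ^ 2) := by
      have h2 := mul_le_mul_of_nonneg_left hnorm (le_of_lt (by linarith : (0:ℝ) < L / 2))
      nlinarith [hsm, hinner, h2]
    have hls := hγmin t ⟨ht0, ht1⟩
    have : f (x + γ • (v - x)) - f xm ≤ f (x + t • (v - x)) - f xm := by linarith
    rw [hh] at *
    nlinarith
  constructor
  · intro hcase
    have hLD : 0 < L * D ^ 2 := by positivity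
    have ht : h / (L * D ^ 2) ∈ Set.Icc (0:ℝ) 1 := by
      constructor
      · positivity
      · rw [div_le_one hLD]; exact hcase
    have := key _ ht
    have heq : h - h / (L * D ^ 2) * h + L / 2 * (h / (L * D ^ 2)) ^ 2 * D ^ 2
        = h - h ^ 2 / (2 * L * D ^ 2) := by
      field_simp
      ring
    rw [heq] at this
    exact this
  · intro hcase
    have := key 1 ⟨zero_le_one, le_refl 1⟩
    have : f (x + γ • (v - x)) - f xm ≤ L / 2 * D ^ 2 := by
      simpa using this
    linarith
end

section
/- Let E be a finite-dimensional real inner product space, X ⊆ E a compact convex set of diameter at most D > 0, and f : E → ℝ a convex differentiable function that is L-smooth on X (L > 0). Let T ≥ 1 and let (x_t)_{t=0}^T be points of X and (S_t)_{t=0}^T finite subsets of X with S_0 = {x_0} and x_t ∈ conv(S_t) for all t. For each t < T choose a_t ∈ argmax_{v∈S_t} ⟨∇f(x_t), v⟩, s_t ∈ argmin_{v∈S_t} ⟨∇f(x_t), v⟩, and v_t ∈ argmin_{v∈X} ⟨∇f(x_t), v⟩, and assume the iterates satisfy: (i) if ⟨∇f(x_t), a_t − s_t⟩ ≥ ⟨∇f(x_t),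 x_t − v_t⟩, then either [drop step] f(x_{t+1}) ≤ f(x_t), S_{t+1} ⊆ S_t, and |S_{t+1}| < |S_t|, or [descent step] f(x_t) − f(x_{t+1}) ≥ ⟨∇f(x_t), a_t − s_t⟩² / (2 L D²) and S_{t+1} ⊆ S_t; (ii) otherwise x_{t+1} = x_t + γ_t (v_t − x_t) where γ_t minimizes γ ↦ f(x_t + γ(v_t − x_t)) over [0,1], and S_{t+1} = S_t ∪ {v_t}. Then f(x_T) − min_{y∈X} f(y) ≤ 4 L D² / T. -/
open RealInnerProductSpace


lemma cfw_grad_ineq {E : Type*} [NormedAddCommGroup E] [InnerProductSpace ℝ E]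
    (f : E → ℝ) (g : E → E) (hconv : ConvexOn ℝ Set.univ f)
    (hdiff : ∀ p : E, HasFDerivAt f ((innerSL ℝ) (g p)) p)
    (p y : E) : f p + ⟪g p, y - p⟫ ≤ f y := by
  have hφconv : ConvexOn ℝ Set.univ (f ∘ (AffineMap.lineMap p y : ℝ →ᵃ[ℝ] E)) := by
    simpa using hconv.comp_affineMap (AffineMap.lineMap p y : ℝ →ᵃ[ℝ] E)
  have heq : (fun τ : ℝ => (AffineMap.lineMap p y : ℝ →ᵃ[ℝ] E) τ) = fun τ : ℝ => τ • (y - p) + p := by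
    funext τ; simp [AffineMap.lineMap_apply]
  have hline : HasDerivAt (fun τ : ℝ => (AffineMap.lineMap p y : ℝ →ᵃ[ℝ] E) τ) (y - p) 0 := by
    rw [heq]
    simpa using ((hasDerivAt_id (0:ℝ)).smul_const (y - p)).add_const p
  have h0 : (AffineMap.lineMap p y : ℝ →ᵃ[ℝ] E) (0:ℝ) = p := by simp
  have hf' : HasFDerivAt f ((innerSL ℝ) (g p)) ((AffineMap.lineMap p y : ℝ →ᵃ[ℝ] E) (0:ℝ)) := by
    rw [h0]; exact hdiff p
  have hder : HasDerivAt (f ∘ (AffineMap.lineMap p y : ℝ →ᵃ[ℝ] E)) ⟪g p, y - p⟫ 0 := by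
    simpa using hf'.comp_hasDerivAt (0:ℝ) hline
  have hs := hφconv.le_slope_of_hasDerivAt (Set.mem_univ (0:ℝ)) (Set.mem_univ 1) one_pos hder
  rw [slope_def_field] at hs
  simp [AffineMap.lineMap_apply_module] at hs
  linarith

lemma cfw_phi_step (C m : ℝ) (k : ℕ) (hC : 0 < C) (hm0 : 0 ≤ m) (hmC : m ≤ C)
    (hmk : m * ((k:ℝ) + 1) ≤ 2 * C) :
    m - m ^ 2 / (2 * C) ≤ 2 * C / ((k:ℝ) + 2) := by
  have hK : (0:ℝ) ≤ (k:ℝ) := Nat.cast_nonneg k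
  have h1 : m - m ^ 2 / (2 * C) = (2 * C * m - m ^ 2) / (2 * C) := by field_simp
  rw [h1, div_le_div_iff₀ (by linarith) (by linarith)]
  rcases le_total ((k:ℝ) + 1) 2 with hk2 | hk2
  · nlinarith [sq_nonneg (C - m), mul_nonneg hm0 (sub_nonneg.2 hmC)]
  · nlinarith [sq_nonneg (C - m), mul_nonneg hm0 (sub_nonneg.2 hmC),
      mul_nonneg (sub_nonneg.2 hmk) hm0, mul_nonneg (sub_nonneg.2 hmk) (sub_nonneg.2 hmC),
      mul_nonneg (sub_nonneg.2 hmk) (sub_nonneg.2 hk2)]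


/-- Sublinear convergence of the Corrective Frank-Wolfe algorithm: under the corrective-step
conditions (drop step, descent step, or exact-line-search Frank-Wolfe step), after `T`
iterations `f (x T) - f* ≤ 4 L D² / T`. -/
theorem corrective_frank_wolfe_sublinear
    {E : Type*} [NormedAddCommGroup E] [InnerProductSpace ℝ E] [FiniteDimensional ℝ E] [DecidableEq E]
    (X : Set E) (hXcomp : IsCompact X) (hXconv : Convex ℝ X)
    (D L : ℝ) (hD : 0 < D) (hL : 0 < L)
    (hdiam : ∀ p ∈ X, ∀ q ∈ X, ‖p - q‖ ≤ D)
    (f : E → ℝ) (g : E → E)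
    (hconv : ConvexOn ℝ Set.univ f)
    (hdiff : ∀ p : E, HasFDerivAt f ((innerSL ℝ) (g p)) p)
    (hsmooth : ∀ p ∈ X, ∀ q ∈ X, f q - f p ≤ ⟪g p, q - p⟫ + L / 2 * ‖q - p‖ ^ 2)
    (T : ℕ) (hT : 1 ≤ T)
    (x : ℕ → E) (S : ℕ → Finset E) (a s v : ℕ → E)
    (hxX : ∀ t ≤ T, x t ∈ X)
    (hSX : ∀ t ≤ T, (S t : Set E) ⊆ X)
    (hS0 : S 0 = {x 0})
    (hxconv : ∀ t ≤ T, x t ∈ convexHull ℝ (S t : Set E))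
    (ha : ∀ t < T, a t ∈ S t ∧ ∀ u ∈ S t, ⟪g (x t), u⟫ ≤ ⟪g (x t), a t⟫)
    (hs : ∀ t < T, s t ∈ S t ∧ ∀ u ∈ S t, ⟪g (x t), s t⟫ ≤ ⟪g (x t), u⟫)
    (hv : ∀ t < T, v t ∈ X ∧ ∀ u ∈ X, ⟪g (x t), v t⟫ ≤ ⟪g (x t), u⟫)
    (hcorrective : ∀ t < T, ⟪g (x t), a t - s t⟫ ≥ ⟪g (x t), x t - v t⟫ →
      ((f (x (t + 1)) ≤ f (x t) ∧ S (t + 1) ⊆ S t ∧ (S (t + 1)).card < (S t).card) ∨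
       (f (x t) - f (x (t + 1)) ≥ ⟪g (x t), a t - s t⟫ ^ 2 / (2 * L * D ^ 2) ∧
         S (t + 1) ⊆ S t)))
    (hfw : ∀ t < T, ¬(⟪g (x t), a t - s t⟫ ≥ ⟪g (x t), x t - v t⟫) →
      ∃ γ ∈ Set.Icc (0:ℝ) 1,
        x (t + 1) = x t + γ • (v t - x t) ∧
        (∀ γ' ∈ Set.Icc (0:ℝ) 1, f (x (t + 1)) ≤ f (x t + γ' • (v t - x t))) ∧
        S (t + 1) = insert (v t) (S t))
    (xm : E) (hxm : xm ∈ X) (hxmin : ∀ y ∈ X, f xm ≤ f y) :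
    f (x T) - f xm ≤ 4 * L * D ^ 2 / T := by
  set C : ℝ := L * D ^ 2 with hCdef
  have hCpos : 0 < C := by positivity
  set err : ℕ → ℝ := fun t => f (x t) - f xm with herr
  clear_value C err
  have hgi : ∀ p y : E, f p + ⟪g p, y - p⟫ ≤ f y := cfw_grad_ineq f g hconv hdiff
  have hnn : ∀ t, t ≤ T → 0 ≤ err t := by
    intro t ht; rw [herr]; exact sub_nonneg.2 (hxmin _ (hxX t ht))
  have hgap : ∀ t, t < T → err t ≤ ⟪g (x t), x t - v t⟫ := by
    intro t ht
    have h1 := hgi (x t) xm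
    have h2 := (hv t ht).2 xm hxm
    rw [inner_sub_right] at h1
    rw [inner_sub_right]
    simp only [herr]
    linarith
  -- the key per-step dichotomy
  have key : ∀ t, t < T →
      (err (t+1) ≤ err t ∧ (S (t+1)).card + 1 ≤ (S t).card) ∨
      (err (t+1) ≤ min (err t) C - (min (err t) C) ^ 2 / (2 * C) ∧
        (S (t+1)).card ≤ (S t).card + 1) := by
    intro t ht
    have htT : t ≤ T := ht.le
    have he0 : 0 ≤ err t := hnn t htT
    by_cases hc : ⟪g (x t), a t - s t⟫ ≥ ⟪g (x t), x t - v t⟫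
    · rcases hcorrective t ht hc with ⟨hf1, _, hcard⟩ | ⟨hprog, hsub⟩
      · exact Or.inl ⟨by simp only [herr]; exact sub_le_sub_right hf1 _, hcard⟩
      · refine Or.inr ⟨?_, le_trans (Finset.card_le_card hsub) (Nat.le_succ _)⟩
        have hP : err t ≤ ⟪g (x t), a t - s t⟫ := le_trans (hgap t ht) hc
        have hP2 : err t ^ 2 ≤ ⟪g (x t), a t - s t⟫ ^ 2 := by nlinarith
        have h2C : (2 : ℝ) * L * D ^ 2 = 2 * C := by rw [hCdef]; ring
        rw [h2C] at hprog
        have hstep : err (t+1) ≤ err t - err t ^ 2 / (2 * C) := by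
          have hdiv : err t ^ 2 / (2 * C) ≤ ⟪g (x t), a t - s t⟫ ^ 2 / (2 * C) := by
            gcongr
          simp only [herr] at hdiv hprog ⊢
          linarith
        rcases le_total (err t) C with hh | hh
        · rw [min_eq_left hh]; exact hstep
        · rw [min_eq_right hh]
          have h2Cpos : (0:ℝ) < 2 * C := by linarith
          have hCsq : C ^ 2 / (2 * C) = C / 2 := by field_simp
          have hkey : err t - C / 2 ≤ err t ^ 2 / (2 * C) := by
            rw [le_div_iff₀ h2Cpos]
            nlinarith [sq_nonneg (err t - C)]
          rw [hCsq]
          linarith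
    · obtain ⟨γ, hγmem, hxeq, hls, hSeq⟩ := hfw t ht hc
      refine Or.inr ⟨?_, by rw [hSeq]; exact Finset.card_insert_le _ _⟩
      set γ₀ : ℝ := min (err t / C) 1 with hγ₀
      clear_value γ₀
      have hγ₀0 : 0 ≤ γ₀ := by
        rw [hγ₀]; exact le_min (div_nonneg he0 hCpos.le) zero_le_one
      have hγ₀1 : γ₀ ≤ 1 := by rw [hγ₀]; exact min_le_right _ _
      have hvX : v t ∈ X := (hv t ht).1
      have hxtX : x t ∈ X := hxX t htT
      have hqX : x t + γ₀ • (v t - x t) ∈ X := by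
        have := hXconv hxtX hvX (by linarith : (0:ℝ) ≤ 1 - γ₀) hγ₀0 (by ring)
        convert this using 1
        rw [smul_sub, sub_smul, one_smul]; abel
      have hnorm : ‖v t - x t‖ ≤ D := hdiam _ hvX _ hxtX
      have hsm := hsmooth (x t) hxtX _ hqX
      rw [add_sub_cancel_left, real_inner_smul_right] at hsm
      have hnrm2 : ‖γ₀ • (v t - x t)‖ ^ 2 ≤ γ₀ ^ 2 * D ^ 2 := by
        rw [norm_smul, Real.norm_eq_abs, abs_of_nonneg hγ₀0, mul_pow]
        exact mul_le_mul_of_nonneg_left (by nlinarith [norm_nonneg (v t - x t)]) (by positivity)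
      have hls0 := hls γ₀ ⟨hγ₀0, hγ₀1⟩
      have hgapv : ⟪g (x t), v t - x t⟫ = -⟪g (x t), x t - v t⟫ := by
        rw [inner_sub_right, inner_sub_right]; ring
      have hG := hgap t ht
      have hmain : err (t+1) ≤ err t - γ₀ * err t + γ₀ ^ 2 * C / 2 := by
        have h1 : f (x (t+1)) ≤ f (x t) + γ₀ * ⟪g (x t), v t - x t⟫ + L / 2 * (γ₀ ^ 2 * D ^ 2) := by
          have := mul_le_mul_of_nonneg_left hnrm2 (by positivity : (0:ℝ) ≤ L / 2)
          linarith [hls0, hsm]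
        have h2 : γ₀ * err t ≤ γ₀ * ⟪g (x t), x t - v t⟫ := mul_le_mul_of_nonneg_left hG hγ₀0
        have hLD : L / 2 * (γ₀ ^ 2 * D ^ 2) = γ₀ ^ 2 * C / 2 := by rw [hCdef]; ring
        rw [hgapv] at h1
        simp only [herr] at h2 ⊢
        linarith
      rcases le_total (err t) C with hh | hh
      · have hγval : γ₀ = err t / C := by
          have h1 : err t / C ≤ 1 := (div_le_one hCpos).mpr hh
          rw [hγ₀, min_eq_left h1]
        rw [min_eq_left hh]
        rw [hγval] at hmain
        have hE : err t - err t / C * err t + (err t / C) ^ 2 * C / 2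
            = err t - err t ^ 2 / (2 * C) := by field_simp; ring
        linarith [hE ▸ hmain]
      · have hγval : γ₀ = 1 := by
          have h1 : (1:ℝ) ≤ err t / C := (one_le_div hCpos).mpr hh
          rw [hγ₀, min_eq_right h1]
        rw [min_eq_right hh]
        rw [hγval] at hmain
        have hE : C - C ^ 2 / (2 * C) = C / 2 := by field_simp; ring
        rw [hE]; linarith
  -- invariant by induction
  have inv : ∀ t, t ≤ T → ∃ k : ℕ,
      t + (S t).card ≤ 1 + 2 * k ∧ (k = 0 ∨ err t ≤ 2 * C / ((k:ℝ) + 1)) := by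
    intro t
    induction t with
    | zero => exact fun _ => ⟨0, by simp [hS0], Or.inl rfl⟩
    | succ n ih =>
      intro hn1
      have hnT : n < T := hn1
      obtain ⟨k, hcard, hk⟩ := ih hnT.le
      rcases key n hnT with ⟨he, hc⟩ | ⟨he, hc⟩
      · exact ⟨k, by omega, hk.imp id fun hb => he.trans hb⟩
      · refine ⟨k + 1, by omega, Or.inr ?_⟩
        have hm0 : 0 ≤ min (err n) C := le_min (hnn n hnT.le) hCpos.le
        have hmC : min (err n) C ≤ C := min_le_right _ _
        have hmk : min (err n) C * ((k:ℝ) + 1) ≤ 2 * C := by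
          rcases hk with h0 | hb
          · subst h0; push_cast; nlinarith [min_le_right (err n) C]
          · have h1 : min (err n) C ≤ 2 * C / ((k:ℝ) + 1) := (min_le_left _ _).trans hb
            have hkpos : (0:ℝ) < (k:ℝ) + 1 := by positivity
            calc min (err n) C * ((k:ℝ) + 1)
                ≤ 2 * C / ((k:ℝ) + 1) * ((k:ℝ) + 1) :=
                  mul_le_mul_of_nonneg_right h1 hkpos.le
              _ = 2 * C := div_mul_cancel₀ _ hkpos.ne'
        have := cfw_phi_step C (min (err n) C) k hCpos hm0 hmC hmk
        have hcast : ((k + 1 : ℕ) : ℝ) + 1 = (k:ℝ) + 2 := by push_cast; ring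
        rw [hcast]
        linarith
  obtain ⟨k, hcard, hk⟩ := inv T le_rfl
  have hST : 1 ≤ (S T).card := by
    rcases (S T).eq_empty_or_nonempty with he | hne
    · exfalso
      have := hxconv T le_rfl
      rw [he] at this
      simp at this
    · exact Finset.card_pos.2 hne
  have hTk : T ≤ 2 * k := by omega
  have hk1 : 1 ≤ k := by omega
  have hk0 : ¬ (k = 0) := by omega
  have herrT : err T ≤ 2 * C / ((k:ℝ) + 1) := hk.resolve_left hk0
  have hT0 : (0:ℝ) < (T:ℝ) := by exact_mod_cast hT
  have hfinal : 2 * C / ((k:ℝ) + 1) ≤ 4 * C / (T:ℝ) := by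
    rw [div_le_div_iff₀ (by positivity) hT0]
    have : (T:ℝ) ≤ 2 * (k:ℝ) := by exact_mod_cast hTk
    nlinarith
  rw [show f (x T) - f xm = err T from by rw [herr]]
  calc err T ≤ 2 * C / ((k:ℝ) + 1) := herrT
    _ ≤ 4 * C / (T:ℝ) := hfinal
    _ = 4 * L * D ^ 2 / (T:ℝ) := by rw [hCdef]; ring
end

section
/- Let E be a real inner product space, let f : E → ℝ be convex, differentiable, and L-smooth on E (L > 0). Let x, a, s ∈ E with d = a − s ≠ 0 and g = ⟨∇f(x), d⟩ ≥ 0, let γ_max > 0, and let γ* minimize γ ↦ f(x − γ d) over [0, γ_max], with x' = x − γ* d. Set γ̂ = g / (L ‖d‖²). Then f(x') ≤ f(x); moreover, if γ̂ ≤ γ_max then f(x) − f(x') ≥ g² / (2 L ‖d‖²), and if γ̂ > γ_max then γ_max is a minimizer of γ ↦ f(x − γ d) over [0, γ_max], i.e., f(x − γ_max d) ≤ f(x − γ d) for all γ ∈ [0, γ_max]. -/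
open RealInnerProductSpace

section aux
variable {E : Type*} [NormedAddCommGroup E] [InnerProductSpace ℝ E]

lemma grad_ineq_aux (f : E → ℝ) (g : E → E)
    (hconv : ConvexOn ℝ Set.univ f)
    (hdiff : ∀ p : E, HasFDerivAt f ((innerSL ℝ) (g p)) p)
    (p q : E) : ⟪g p, q - p⟫ ≤ f q - f p := by
  have hline : HasDerivAt (fun t : ℝ => p + t • (q - p)) (q - p) 0 := by
    simpa using ((hasDerivAt_id (0:ℝ)).smul_const (q - p)).const_add p
  have hψ : HasDerivAt (fun t : ℝ => f (p + t • (q - p))) ⟪g p, q - p⟫ 0 := by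
    have := (hdiff (p + (0:ℝ) • (q - p))).comp_hasDerivAt 0 hline
    simpa [Function.comp_def] using this
  have hcv : ConvexOn ℝ Set.univ (fun t : ℝ => f (p + t • (q - p))) := by
    have h := hconv.comp_affineMap (AffineMap.lineMap p q)
    have : (f ∘ (AffineMap.lineMap p q : ℝ →ᵃ[ℝ] E)) = fun t : ℝ => f (p + t • (q - p)) := by
      funext t
      simp [AffineMap.lineMap_apply, add_comm]
    rw [this] at h
    simpa using h
  have hs := hcv.le_slope_of_hasDerivAt (Set.mem_univ (0:ℝ)) (Set.mem_univ (1:ℝ)) one_pos hψ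
  have : slope (fun t : ℝ => f (p + t • (q - p))) 0 1 = f q - f p := by
    simp [slope_def_field]
  linarith [hs.trans_eq this]
end aux

section aux2
variable {E : Type*} [NormedAddCommGroup E] [InnerProductSpace ℝ E]

lemma coco_aux (f : E → ℝ) (g : E → E) (L : ℝ) (hL : 0 < L)
    (hconv : ConvexOn ℝ Set.univ f)
    (hdiff : ∀ p : E, HasFDerivAt f ((innerSL ℝ) (g p)) p)
    (hsmooth : ∀ p q : E, f q - f p ≤ ⟪g p, q - p⟫ + L / 2 * ‖q - p‖ ^ 2)
    (p q : E) :
    ‖g q - g p‖ ^ 2 / (2 * L) ≤ f q - f p - ⟪g p, q - p⟫ := by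
  set v := g q - g p with hv
  set q' := q - L⁻¹ • v with hq'
  have h1 : ⟪g p, q' - p⟫ ≤ f q' - f p := grad_ineq_aux f g hconv hdiff p q'
  have h2 : f q' - f q ≤ ⟪g q, q' - q⟫ + L / 2 * ‖q' - q‖ ^ 2 := hsmooth q q'
  have e1 : q' - q = -(L⁻¹ • v) := by rw [hq']; abel
  have e2 : ⟪g q, q' - q⟫ = -(L⁻¹ * ⟪g q, v⟫) := by
    rw [e1, inner_neg_right, real_inner_smul_right]
  have e3 : ‖q' - q‖ ^ 2 = L⁻¹ ^ 2 * ‖v‖ ^ 2 := by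
    rw [e1, norm_neg, norm_smul, mul_pow]
    simp [hL.le, abs_of_nonneg, inv_nonneg]
  have e4 : ⟪g p, q' - p⟫ = ⟪g p, q - p⟫ - L⁻¹ * ⟪g p, v⟫ := by
    have : q' - p = (q - p) - L⁻¹ • v := by rw [hq']; abel
    rw [this, inner_sub_right, real_inner_smul_right]
  have e5 : ⟪g q, v⟫ - ⟪g p, v⟫ = ‖v‖ ^ 2 := by
    rw [← inner_sub_left, ← hv, real_inner_self_eq_norm_sq]
  rw [e2, e3] at h2
  rw [e4] at h1
  have hL' : L ≠ 0 := hL.ne'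
  have key : ⟪g p, q - p⟫ - L⁻¹ * ⟪g p, v⟫ ≤ f q - f p - L⁻¹ * ⟪g q, v⟫ + L / 2 * (L⁻¹ ^ 2 * ‖v‖ ^ 2) := by
    linarith
  have eA : L / 2 * (L⁻¹ ^ 2 * ‖v‖ ^ 2) = ‖v‖ ^ 2 / (2 * L) := by
    field_simp
  have eB : L⁻¹ * ⟪g q, v⟫ - L⁻¹ * ⟪g p, v⟫ = ‖v‖ ^ 2 / L := by
    rw [← mul_sub, e5]
    field_simp
  have eC : ‖v‖ ^ 2 / L = 2 * (‖v‖ ^ 2 / (2 * L)) := by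
    field_simp
  linarith

lemma grad_lip_aux (f : E → ℝ) (g : E → E) (L : ℝ) (hL : 0 < L)
    (hconv : ConvexOn ℝ Set.univ f)
    (hdiff : ∀ p : E, HasFDerivAt f ((innerSL ℝ) (g p)) p)
    (hsmooth : ∀ p q : E, f q - f p ≤ ⟪g p, q - p⟫ + L / 2 * ‖q - p‖ ^ 2)
    (p q : E) : ‖g q - g p‖ ≤ L * ‖q - p‖ := by
  have h1 := coco_aux f g L hL hconv hdiff hsmooth p q
  have h2 := coco_aux f g L hL hconv hdiff hsmooth q p
  have e : ⟪g p, q - p⟫ + ⟪g q, p - q⟫ = -⟪g q - g p, q - p⟫ := by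
    rw [inner_sub_left]
    have : p - q = -(q - p) := by abel
    rw [this, inner_neg_right]
    ring
  have e2 : ‖g p - g q‖ = ‖g q - g p‖ := by rw [← norm_neg]; congr 1; abel
  rw [e2] at h2
  have hsum : ‖g q - g p‖ ^ 2 / L ≤ ⟪g q - g p, q - p⟫ := by
    have hadd := add_le_add h1 h2
    rw [← add_div] at hadd
    have heq : (‖g q - g p‖ ^ 2 + ‖g q - g p‖ ^ 2) / (2 * L) = ‖g q - g p‖ ^ 2 / L := by
      field_simp
      ring
    linarith
  have hcs : ⟪g q - g p, q - p⟫ ≤ ‖g q - g p‖ * ‖q - p‖ := real_inner_le_norm _ _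
  rcases eq_or_lt_of_le (norm_nonneg (g q - g p)) with h0 | h0
  · rw [← h0]; positivity
  · have : ‖g q - g p‖ ^ 2 / L ≤ ‖g q - g p‖ * ‖q - p‖ := hsum.trans hcs
    rw [div_le_iff₀ hL] at this
    nlinarith
end aux2

/-- Local pairwise step of the Corrective Frank-Wolfe framework: line search in the direction
`-(a - s)` over `[0, γ_max]` never increases `f`; if the short step `γ̂ = g/(L‖d‖²)` fits in
`[0, γ_max]` the step makes progress `g²/(2L‖d‖²)`, and otherwise `γ_max` is itself a
minimizer of the line-search problem (drop step). -/
theorem pairwise_step_cases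
    {E : Type*} [NormedAddCommGroup E] [InnerProductSpace ℝ E]
    (f : E → ℝ) (g : E → E) (L : ℝ) (hL : 0 < L)
    (hconv : ConvexOn ℝ Set.univ f)
    (hdiff : ∀ p : E, HasFDerivAt f ((innerSL ℝ) (g p)) p)
    (hsmooth : ∀ p q : E, f q - f p ≤ ⟪g p, q - p⟫ + L / 2 * ‖q - p‖ ^ 2)
    (x a s : E) (hd : a - s ≠ 0) (hgap : ⟪g x, a - s⟫ ≥ 0)
    (γmax : ℝ) (hγmax : 0 < γmax)
    (γstar : ℝ) (hγstar : γstar ∈ Set.Icc (0:ℝ) γmax)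
    (hγmin : ∀ γ ∈ Set.Icc (0:ℝ) γmax, f (x - γstar • (a - s)) ≤ f (x - γ • (a - s))) :
    f (x - γstar • (a - s)) ≤ f x ∧
    (⟪g x, a - s⟫ / (L * ‖a - s‖ ^ 2) ≤ γmax →
      f x - f (x - γstar • (a - s)) ≥ ⟪g x, a - s⟫ ^ 2 / (2 * L * ‖a - s‖ ^ 2)) ∧
    (⟪g x, a - s⟫ / (L * ‖a - s‖ ^ 2) > γmax →
      ∀ γ ∈ Set.Icc (0:ℝ) γmax, f (x - γmax • (a - s)) ≤ f (x - γ • (a - s))) := by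
  set d := a - s with hdd
  set G := ⟪g x, d⟫ with hG
  have hdpos : 0 < ‖d‖ := norm_pos_iff.mpr hd
  have hnd : 0 < ‖d‖ ^ 2 := by positivity
  have hLnd : 0 < L * ‖d‖ ^ 2 := by positivity
  have part1 : f (x - γstar • d) ≤ f x := by
    have h0 := hγmin 0 ⟨le_refl 0, hγmax.le⟩
    simpa using h0
  refine ⟨part1, ?_, ?_⟩
  · intro hle
    set γhat := G / (L * ‖d‖ ^ 2) with hγhat
    have hγhat0 : 0 ≤ γhat := div_nonneg hgap hLnd.le
    have hst := hγmin γhat ⟨hγhat0, hle⟩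
    have hsm := hsmooth x (x - γhat • d)
    have e1 : (x - γhat • d) - x = -(γhat • d) := by abel
    rw [e1, inner_neg_right, real_inner_smul_right, norm_neg, norm_smul, mul_pow] at hsm
    have e2 : ‖γhat‖ = γhat := by rw [Real.norm_eq_abs, abs_of_nonneg hγhat0]
    rw [e2] at hsm
    have ealg : -(γhat * G) + L / 2 * (γhat ^ 2 * ‖d‖ ^ 2) = -(G ^ 2 / (2 * L * ‖d‖ ^ 2)) := by
      rw [hγhat]
      field_simp
      ring
    linarith
  · intro hgt γ hγ
    have hGlb : γmax * (L * ‖d‖ ^ 2) < G := (lt_div_iff₀ hLnd).mp hgt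
    set p := x - γmax • d with hp
    have hlip := grad_lip_aux f g L hL hconv hdiff hsmooth x p
    have epx : p - x = -(γmax • d) := by rw [hp]; abel
    have enorm : ‖p - x‖ = γmax * ‖d‖ := by
      rw [epx, norm_neg, norm_smul, Real.norm_eq_abs, abs_of_nonneg hγmax.le]
    rw [enorm] at hlip
    have hinner : 0 ≤ ⟪g p, d⟫ := by
      have hsplit : ⟪g p, d⟫ = G + ⟪g p - g x, d⟫ := by
        rw [inner_sub_left, hG]
        ring
      have hcs : -(‖g p - g x‖ * ‖d‖) ≤ ⟪g p - g x, d⟫ := by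
        have := abs_real_inner_le_norm (g p - g x) d
        have := neg_abs_le ⟪g p - g x, d⟫
        linarith [abs_real_inner_le_norm (g p - g x) d, neg_abs_le ⟪g p - g x, d⟫]
      have hbound : ‖g p - g x‖ * ‖d‖ ≤ γmax * (L * ‖d‖ ^ 2) := by
        have := mul_le_mul_of_nonneg_right hlip (norm_nonneg d)
        nlinarith [norm_nonneg d]
      linarith [hsplit, hcs, hbound]
    have hgi := grad_ineq_aux f g hconv hdiff p (x - γ • d)
    have edir : (x - γ • d) - p = (γmax - γ) • d := by
      rw [hp, sub_smul]
      abel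
    rw [edir, real_inner_smul_right] at hgi
    have hnn : 0 ≤ (γmax - γ) * ⟪g p, d⟫ :=
      mul_nonneg (by linarith [hγ.2]) hinner
    linarith
end

section
/- Let f : ℝⁿ → ℝ be convex, differentiable, and L-smooth on ℝⁿ (L > 0), and let P, Q ⊆ ℝⁿ be nonempty compact convex sets with P ∩ Q ≠ ∅. Let the sequences (x_t) ⊆ P and (y_t) ⊆ Q be generated by the Split Conditional Gradient iteration with λ_t = ln(t+2) and γ_t = 2/(√(t+2)·ln(t+2)): x̄_t = (x_t+y_t)/2, v_t minimizes ⟨∇f(x̄_t) + λ_t(x_t − x̄_t), ·⟩ over P, w_t minimizes ⟨∇f(x̄_t) + λ_t(y_t − x̄_t), ·⟩ over Q, x_{t+1} = x_t + γ_t(v_t − x_t), y_{t+1} = y_t + γ_t(w_t − y_t). Then ‖x_t − y_t‖ → 0 as t → ∞, and every accumulation point (x̃, ỹ) of the sequence ((x_t, y_t)) satisfies x̃ = ỹ ∈ P ∩ Q and f(x̃) = min_{z ∈ P∩Q} f(z). -/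
open RealInnerProductSpace Filter Topology Finset

private lemma grad_convex_ineq {F : Type*} [NormedAddCommGroup F] [InnerProductSpace ℝ F]
    [CompleteSpace F] {f : F → ℝ} {G : F} (m z : F) (hconv : ConvexOn ℝ Set.univ f)
    (hd : HasGradientAt f G m) : f m + ⟪G, z - m⟫ ≤ f z := by
  have h1 : HasDerivAt (fun s : ℝ => m + s • (z - m)) (z - m) 0 := by
    simpa using ((hasDerivAt_id (0:ℝ)).smul_const (z - m)).const_add m
  have hline : HasDerivAt (fun s : ℝ => f (m + s • (z - m))) ⟪G, z - m⟫ 0 := by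
    have hd' : HasFDerivAt f ((InnerProductSpace.toDual ℝ F) G) (m + (0:ℝ) • (z - m)) := by
      simpa using hd.hasFDerivAt
    have h2 := hd'.comp_hasDerivAt (x := (0:ℝ)) h1
    simpa [InnerProductSpace.toDual_apply_apply, Function.comp_def] using h2
  have hslope := hasDerivAt_iff_tendsto_slope.mp hline
  have hslope' : Tendsto (slope (fun s : ℝ => f (m + s • (z - m))) 0) (𝓝[>] (0:ℝ))
      (𝓝 ⟪G, z - m⟫) := hslope.mono_left (nhdsWithin_mono _ (fun s hs => ne_of_gt hs))
  have hev : ∀ᶠ s in 𝓝[>] (0:ℝ),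
      slope (fun s : ℝ => f (m + s • (z - m))) 0 s ≤ f z - f m := by
    filter_upwards [Ioc_mem_nhdsGT_of_mem (Set.mem_Ico.mpr ⟨le_refl (0:ℝ), zero_lt_one⟩)]
      with s hs
    obtain ⟨hs0, hs1⟩ := hs
    have hcomb : f ((1-s) • m + s • z) ≤ (1-s) * f m + s * f z :=
      hconv.2 (Set.mem_univ m) (Set.mem_univ z) (by linarith) hs0.le (by ring)
    have heq : m + s • (z - m) = (1 - s) • m + s • z := by module
    rw [slope_def_field]
    have hfs : f (m + s • (z - m)) ≤ (1 - s) * f m + s * f z := by rw [heq]; exact hcomb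
    simp only [sub_zero, zero_smul, add_zero]
    rw [div_le_iff₀ hs0]
    nlinarith
  have := le_of_tendsto hslope' hev
  linarith

private lemma seq_eventually_le (h γ e : ℕ → ℝ) (B : ℝ)
    (hlb : ∀ t, -B ≤ h t)
    (hrec : ∀ t, h (t+1) ≤ (1 - γ t) * h t + e t)
    (hγpos : ∀ t, 0 < γ t)
    (hγ1 : ∀ᶠ t in atTop, γ t ≤ 1)
    (hdiv : Tendsto (fun N => ∑ s ∈ Finset.range N, γ s) atTop atTop)
    (heps : ∀ ε > 0, ∀ᶠ t in atTop, e t ≤ ε * γ t) :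
    ∀ ε > 0, ∀ᶠ t in atTop, h t ≤ ε := by
  intro ε hε
  obtain ⟨T, hT⟩ := (hγ1.and (heps (ε/2) (by linarith))).exists_forall_of_atTop
  -- decrease step
  have hdec : ∀ t, T ≤ t → ε < h t → h (t+1) ≤ h t - ε/2 * γ t := by
    intro t ht hht
    have h1 := (hT t ht).1
    have h2 := (hT t ht).2
    have h3 := hrec t
    nlinarith [mul_le_mul_of_nonneg_left hht.le (hγpos t).le]
  -- there exists a time ≥ T where h ≤ ε
  have hex : ∃ t, T ≤ t ∧ h t ≤ ε := by
    by_contra hcon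
    push_neg at hcon
    have hgt : ∀ t, T ≤ t → ε < h t := fun t ht => hcon t ht
    have key : ∀ k, h (T+k) ≤ h T - ε/2 * ∑ i ∈ Finset.range k, γ (T+i) := by
      intro k
      induction k with
      | zero => simp
      | succ k ih =>
        have := hdec (T+k) (Nat.le_add_right _ _) (hgt (T+k) (Nat.le_add_right _ _))
        rw [Finset.sum_range_succ, show T + (k+1) = (T+k) + 1 from rfl]
        linarith
    have hsum : Tendsto (fun k => ∑ i ∈ Finset.range k, γ (T+i)) atTop atTop := by
      have hEq : ∀ k, ∑ i ∈ Finset.range k, γ (T+i)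
          = (∑ i ∈ Finset.range (T+k), γ i) - ∑ i ∈ Finset.range T, γ i := by
        intro k
        rw [Finset.sum_range_add]
        ring
      simp only [hEq]
      apply tendsto_atTop_add_const_right
      exact hdiv.comp (by simpa [Nat.add_comm] using tendsto_add_atTop_nat T)
    obtain ⟨k, hk⟩ := (hsum.eventually_ge_atTop ((h T + B + 1) * (2/ε))).exists
    have h1 := key k
    have h2 := hlb (T+k)
    have : ε/2 * ((h T + B + 1) * (2/ε)) ≤ ε/2 * ∑ i ∈ Finset.range k, γ (T+i) :=
      mul_le_mul_of_nonneg_left hk (by linarith)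
    rw [show ε/2 * ((h T + B + 1) * (2/ε)) = h T + B + 1 by field_simp] at this
    linarith
  obtain ⟨t0, ht0T, ht0⟩ := hex
  rw [eventually_atTop]
  refine ⟨t0, ?_⟩
  intro t ht
  induction t, ht using Nat.le_induction with
  | base => exact ht0
  | succ t ht ih =>
    have hTt : T ≤ t := le_trans ht0T ht
    have h1 := (hT t hTt).1
    have h2 := (hT t hTt).2
    have h3 := hrec t
    nlinarith [mul_le_mul_of_nonneg_left ih (hγpos t).le, hγpos t]

private lemma log_le_sqrt' {u : ℝ} (hu : 0 < u) : Real.log u ≤ Real.sqrt u := by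
  have ha : 0 < u ^ ((1:ℝ)/4) := Real.rpow_pos_of_pos hu _
  have h1 : Real.log (u ^ ((1:ℝ)/4)) ≤ u ^ ((1:ℝ)/4) - 1 := Real.log_le_sub_one_of_pos ha
  have h2 : Real.log (u ^ ((1:ℝ)/4)) = (1/4) * Real.log u := Real.log_rpow hu _
  have h3 : Real.sqrt u = (u ^ ((1:ℝ)/4)) ^ 2 := by
    rw [Real.sqrt_eq_rpow, ← Real.rpow_natCast (u ^ ((1:ℝ)/4)) 2, ← Real.rpow_mul hu.le]
    norm_num
  nlinarith [sq_nonneg (u ^ ((1:ℝ)/4) - 2)]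

private lemma gam_div' :
    Tendsto (fun N => ∑ s ∈ Finset.range N,
      2 / (Real.sqrt ((s:ℝ)+2) * Real.log ((s:ℝ)+2))) atTop atTop := by
  have hharm : Tendsto (fun N => ∑ i ∈ Finset.range N, (2 / ((i:ℝ)+2))) atTop atTop := by
    have h0 := Real.tendsto_sum_range_one_div_nat_succ_atTop
    have h1 : Tendsto (fun N => ∑ i ∈ Finset.range (N+1), (1 / ((i:ℝ)+1))) atTop atTop :=
      h0.comp (tendsto_add_atTop_nat 1)
    have h2 : Tendsto (fun N => 2 * ((∑ i ∈ Finset.range (N+1), (1 / ((i:ℝ)+1))) - 1))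
        atTop atTop :=
      (tendsto_atTop_add_const_right _ _ h1).const_mul_atTop two_pos
    refine h2.congr (fun N => ?_)
    rw [Finset.sum_range_succ' (fun i : ℕ => (1 / ((i:ℝ)+1))) N]
    rw [mul_sub, mul_add, Finset.mul_sum]
    have : ∀ i ∈ Finset.range N, 2 * (1 / (((i+1:ℕ):ℝ)+1)) = 2 / ((i:ℝ)+2) := by
      intro i _; push_cast; ring
    rw [Finset.sum_congr rfl this]
    norm_num
  refine tendsto_atTop_mono (fun N => Finset.sum_le_sum (fun s _ => ?_)) hharm
  have hs2 : (0:ℝ) < (s:ℝ) + 2 := by positivity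
  have hlog : 0 < Real.log ((s:ℝ)+2) := Real.log_pos (by have := Nat.cast_nonneg (α := ℝ) s; linarith)
  have hsqrt : 0 < Real.sqrt ((s:ℝ)+2) := Real.sqrt_pos.mpr hs2
  have hle : Real.sqrt ((s:ℝ)+2) * Real.log ((s:ℝ)+2) ≤ (s:ℝ)+2 := by
    calc Real.sqrt ((s:ℝ)+2) * Real.log ((s:ℝ)+2)
        ≤ Real.sqrt ((s:ℝ)+2) * Real.sqrt ((s:ℝ)+2) :=
          mul_le_mul_of_nonneg_left (log_le_sqrt' hs2) hsqrt.le
      _ = (s:ℝ)+2 := Real.mul_self_sqrt hs2.le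
  exact div_le_div_of_nonneg_left (by norm_num) (by positivity) hle

set_option maxHeartbeats 1000000 in
private lemma scg_step {F : Type*} [NormedAddCommGroup F] [InnerProductSpace ℝ F]
    {G : F} {L Λ Λ' γ R : ℝ} {x y v w z x' y' : F} {fm fm' fz : ℝ}
    (hL : 0 < L) (hΛ : 0 < Λ) (hΛ' : Λ ≤ Λ') (hγ : 0 < γ)
    (hx' : x' = x + γ • (v - x)) (hy' : y' = y + γ • (w - y))
    (hsm : fm' - fm ≤ ⟪G, (2:ℝ)⁻¹ • (x' + y') - (2:ℝ)⁻¹ • (x + y)⟫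
      + L/2 * ‖(2:ℝ)⁻¹ • (x' + y') - (2:ℝ)⁻¹ • (x + y)‖^2)
    (hor1 : ⟪G + Λ • (x - (2:ℝ)⁻¹ • (x + y)), v⟫ ≤ ⟪G + Λ • (x - (2:ℝ)⁻¹ • (x + y)), z⟫)
    (hor2 : ⟪G + Λ • (y - (2:ℝ)⁻¹ • (x + y)), w⟫ ≤ ⟪G + Λ • (y - (2:ℝ)⁻¹ • (x + y)), z⟫)
    (hcv : fm + ⟪G, z - (2:ℝ)⁻¹ • (x + y)⟫ ≤ fz)
    (ha : ‖v - x‖^2 ≤ 4*R^2) (hb : ‖w - y‖^2 ≤ 4*R^2) (hd2 : ‖x' - y'‖^2 ≤ 4*R^2) :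
    2*(fm' - fz) + Λ'/4 * ‖x' - y'‖^2 ≤
      (1-γ) * (2*(fm - fz) + Λ/4 * ‖x - y‖^2)
      + γ^2*(L+Λ)/2*(8*R^2) + (Λ'-Λ)/4*(4*R^2) := by
  have hma : (2:ℝ)⁻¹ • (x' + y') - (2:ℝ)⁻¹ • (x + y) = (γ/2) • ((v - x) + (w - y)) := by
    rw [hx', hy']; module
  have hdd : x' - y' = (x - y) + γ • ((v - x) - (w - y)) := by
    rw [hx', hy']; module
  have hxm : x - (2:ℝ)⁻¹ • (x + y) = (2:ℝ)⁻¹ • (x - y) := by module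
  have hym : y - (2:ℝ)⁻¹ • (x + y) = -((2:ℝ)⁻¹ • (x - y)) := by module
  have hzm : z - (2:ℝ)⁻¹ • (x + y) = (2:ℝ)⁻¹ • ((z - x) + (z - y)) := by module
  -- F1 : smoothness in scalar form
  have F1 : fm' - fm ≤ γ/2*(⟪G, v - x⟫ + ⟪G, w - y⟫)
      + L/2*((γ/2)^2*‖(v - x) + (w - y)‖^2) := by
    rw [hma] at hsm
    have e1 : ⟪G, (γ/2) • ((v - x) + (w - y))⟫ = γ/2*(⟪G, v - x⟫ + ⟪G, w - y⟫) := by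
      rw [real_inner_smul_right, inner_add_right]
    have e2 : ‖(γ/2) • ((v - x) + (w - y))‖^2 = (γ/2)^2*‖(v - x) + (w - y)‖^2 := by
      rw [norm_smul, mul_pow, Real.norm_eq_abs, sq_abs]
    rw [e1, e2] at hsm
    exact hsm
  -- F2 : exact expansion of ‖x' - y'‖²
  have F2 : ‖x' - y'‖^2 = ‖x - y‖^2
      + 2*γ*(⟪x - y, v - x⟫ - ⟪x - y, w - y⟫) + γ^2*‖(v - x) - (w - y)‖^2 := by
    rw [hdd, norm_add_sq_real, real_inner_smul_right, inner_sub_right,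
      norm_smul, mul_pow, Real.norm_eq_abs, sq_abs]
    ring
  -- F3, F4 : parallelogram-type bounds
  have F3 : ‖(v - x) + (w - y)‖^2 ≤ 2*(‖v - x‖^2 + ‖w - y‖^2) := by
    have h := norm_add_sq_real (v - x) (w - y)
    obtain ⟨h2, h3⟩ := abs_le.mp (abs_real_inner_le_norm (v - x) (w - y))
    nlinarith [sq_nonneg (‖v - x‖ - ‖w - y‖)]
  have F4 : ‖(v - x) - (w - y)‖^2 ≤ 2*(‖v - x‖^2 + ‖w - y‖^2) := by
    have h := norm_sub_sq_real (v - x) (w - y)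
    obtain ⟨h2, h3⟩ := abs_le.mp (abs_real_inner_le_norm (v - x) (w - y))
    nlinarith [sq_nonneg (‖v - x‖ - ‖w - y‖)]
  -- F5, F6 : oracle inequalities in scalar form
  have F5 : ⟪G, v - x⟫ + Λ*(2:ℝ)⁻¹*⟪x - y, v - x⟫
      ≤ ⟪G, z - x⟫ + Λ*(2:ℝ)⁻¹*⟪x - y, z - x⟫ := by
    have h : ⟪G + Λ • (x - (2:ℝ)⁻¹ • (x + y)), v - z⟫ ≤ 0 := by
      rw [inner_sub_right]; linarith
    rw [hxm] at h
    have e : ⟪G + Λ • ((2:ℝ)⁻¹ • (x - y)), v - z⟫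
        = (⟪G, v - x⟫ - ⟪G, z - x⟫)
          + Λ*(2:ℝ)⁻¹*(⟪x - y, v - x⟫ - ⟪x - y, z - x⟫) := by
      rw [show v - z = (v - x) - (z - x) by abel]
      simp only [inner_add_left, inner_sub_right, real_inner_smul_left]
      ring
    rw [e] at h
    linarith
  have F6 : ⟪G, w - y⟫ - Λ*(2:ℝ)⁻¹*⟪x - y, w - y⟫
      ≤ ⟪G, z - y⟫ - Λ*(2:ℝ)⁻¹*⟪x - y, z - y⟫ := by
    have h : ⟪G + Λ • (y - (2:ℝ)⁻¹ • (x + y)), w - z⟫ ≤ 0 := by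
      rw [inner_sub_right]; linarith
    rw [hym] at h
    have e : ⟪G + Λ • (-((2:ℝ)⁻¹ • (x - y))), w - z⟫
        = (⟪G, w - y⟫ - ⟪G, z - y⟫)
          - Λ*(2:ℝ)⁻¹*(⟪x - y, w - y⟫ - ⟪x - y, z - y⟫) := by
      rw [show w - z = (w - y) - (z - y) by abel]
      simp only [inner_add_left, inner_sub_right, inner_neg_left, real_inner_smul_left,
        smul_neg]
      ring
    rw [e] at h
    linarith
  -- F7 : convexity in scalar form
  have F7 : fm + (2:ℝ)⁻¹*(⟪G, z - x⟫ + ⟪G, z - y⟫) ≤ fz := by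
    rw [hzm, real_inner_smul_right, inner_add_right] at hcv
    linarith
  -- F8 : difference identity
  have F8 : ⟪x - y, z - x⟫ - ⟪x - y, z - y⟫ = -‖x - y‖^2 := by
    rw [← inner_sub_right, show (z - x) - (z - y) = -(x - y) by abel,
      inner_neg_right, real_inner_self_eq_norm_sq]
  have F8Λ : Λ*(2:ℝ)⁻¹*(⟪x - y, z - x⟫ - ⟪x - y, z - y⟫) = Λ*(2:ℝ)⁻¹*(-‖x - y‖^2) := by
    rw [F8]
  -- combination
  have K1 : (⟪G, v - x⟫ + ⟪G, w - y⟫)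
      + Λ*(2:ℝ)⁻¹*(⟪x - y, v - x⟫ - ⟪x - y, w - y⟫)
      ≤ 2*(fz - fm) - Λ*(2:ℝ)⁻¹*‖x - y‖^2 := by
    linarith
  have K2 := mul_le_mul_of_nonneg_left K1 hγ.le
  have F2Λ : Λ/4*‖x' - y'‖^2 = Λ/4*‖x - y‖^2
      + Λ/4*(2*γ*(⟪x - y, v - x⟫ - ⟪x - y, w - y⟫))
      + Λ/4*(γ^2*‖(v - x) - (w - y)‖^2) := by rw [F2]; ring
  have K3 : 2*(L/2*((γ/2)^2*‖(v - x) + (w - y)‖^2)) ≤ L*γ^2/2*(‖v - x‖^2 + ‖w - y‖^2) := by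
    have := mul_le_mul_of_nonneg_left F3 (show (0:ℝ) ≤ L*γ^2/4 by positivity)
    linarith
  have K4 : Λ/4*(γ^2*‖(v - x) - (w - y)‖^2) ≤ Λ*γ^2/2*(‖v - x‖^2 + ‖w - y‖^2) := by
    have := mul_le_mul_of_nonneg_left F4 (show (0:ℝ) ≤ Λ*γ^2/4 by positivity)
    linarith
  have K5 : (Λ'-Λ)/4*‖x' - y'‖^2 ≤ (Λ'-Λ)/4*(4*R^2) :=
    mul_le_mul_of_nonneg_left hd2 (by linarith)
  have K6 : L*γ^2/2*(‖v - x‖^2 + ‖w - y‖^2) ≤ L*γ^2/2*(8*R^2) :=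
    mul_le_mul_of_nonneg_left (by linarith) (by positivity)
  have K7 : Λ*γ^2/2*(‖v - x‖^2 + ‖w - y‖^2) ≤ Λ*γ^2/2*(8*R^2) :=
    mul_le_mul_of_nonneg_left (by linarith) (by positivity)
  have K8 : 0 ≤ γ*(Λ*‖x - y‖^2) := by positivity
  linarith [F1, F2Λ, K2, K3, K4, K5, K6, K7, K8]
private lemma tendsto_nat2' : Tendsto (fun t : ℕ => (t:ℝ) + 2) atTop atTop :=
  tendsto_atTop_add_const_right _ 2 tendsto_natCast_atTop_atTop

private lemma tendsto_sqrt2' : Tendsto (fun t : ℕ => Real.sqrt ((t:ℝ)+2)) atTop atTop := by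
  have h := (tendsto_rpow_atTop (y := (1/2:ℝ)) (by norm_num)).comp tendsto_nat2'
  exact h.congr (fun t => (Real.sqrt_eq_rpow _).symm)

private lemma tendsto_lam' : Tendsto (fun t : ℕ => Real.log ((t:ℝ)+2)) atTop atTop :=
  Real.tendsto_log_atTop.comp tendsto_nat2'

private lemma tendsto_two_div_sqrt' :
    Tendsto (fun t : ℕ => 2 / Real.sqrt ((t:ℝ)+2)) atTop (𝓝 0) := by
  have h := (tendsto_sqrt2'.inv_tendsto_atTop).const_mul (2:ℝ)
  simp only [mul_zero] at h
  exact h.congr (fun t => by simp [Pi.inv_apply, div_eq_mul_inv])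

private lemma tendsto_logdiv' :
    Tendsto (fun t : ℕ => Real.log ((t:ℝ)+2) / Real.sqrt ((t:ℝ)+2)) atTop (𝓝 0) := by
  have h0 : Tendsto (fun u : ℝ => Real.log u / u) atTop (𝓝 0) :=
    Real.isLittleO_log_id_atTop.tendsto_div_nhds_zero
  have h1 := (h0.comp tendsto_sqrt2').const_mul (2:ℝ)
  simp only [mul_zero] at h1
  refine h1.congr (fun t => ?_)
  show 2 * (Real.log (Real.sqrt ((t:ℝ)+2)) / Real.sqrt ((t:ℝ)+2)) = _
  rw [Real.log_sqrt (by positivity)]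
  ring
set_option maxHeartbeats 1000000 in
/-- Feasibility and optimality of accumulation points of the Split Conditional Gradient
iterates with penalty `λ_t = ln(t+2)` and step size `γ_t = 2/(√(t+2)·ln(t+2))`:
`‖x_t - y_t‖ → 0` and every accumulation point `(x̃, ỹ)` of `((x_t, y_t))` satisfies
`x̃ = ỹ ∈ P ∩ Q` with `f x̃ = min_{z ∈ P ∩ Q} f z`. -/
theorem split_conditional_gradient_accumulation
    (n : ℕ) (f : EuclideanSpace ℝ (Fin n) → ℝ)
    (g : EuclideanSpace ℝ (Fin n) → EuclideanSpace ℝ (Fin n))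
    (L : ℝ) (hL : 0 < L)
    (hconv : ConvexOn ℝ Set.univ f)
    (hdiff : ∀ p, HasGradientAt f (g p) p)
    (hsmooth : ∀ p q, f q - f p ≤ ⟪g p, q - p⟫ + L / 2 * ‖q - p‖ ^ 2)
    (P Q : Set (EuclideanSpace ℝ (Fin n)))
    (hPne : P.Nonempty) (hPcomp : IsCompact P) (hPconv : Convex ℝ P)
    (hQne : Q.Nonempty) (hQcomp : IsCompact Q) (hQconv : Convex ℝ Q)
    (hPQ : (P ∩ Q).Nonempty)
    (x y v w : ℕ → EuclideanSpace ℝ (Fin n))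
    (hxP : ∀ t : ℕ, x t ∈ P) (hyQ : ∀ t : ℕ, y t ∈ Q)
    (hv : ∀ t : ℕ, v t ∈ P ∧ ∀ u ∈ P,
      ⟪g ((2:ℝ)⁻¹ • (x t + y t)) +
        Real.log ((t : ℝ) + 2) • (x t - (2:ℝ)⁻¹ • (x t + y t)), v t⟫ ≤
      ⟪g ((2:ℝ)⁻¹ • (x t + y t)) +
        Real.log ((t : ℝ) + 2) • (x t - (2:ℝ)⁻¹ • (x t + y t)), u⟫)
    (hw : ∀ t : ℕ, w t ∈ Q ∧ ∀ u ∈ Q,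
      ⟪g ((2:ℝ)⁻¹ • (x t + y t)) +
        Real.log ((t : ℝ) + 2) • (y t - (2:ℝ)⁻¹ • (x t + y t)), w t⟫ ≤
      ⟪g ((2:ℝ)⁻¹ • (x t + y t)) +
        Real.log ((t : ℝ) + 2) • (y t - (2:ℝ)⁻¹ • (x t + y t)), u⟫)
    (hxup : ∀ t : ℕ,
      x (t + 1) = x t + (2 / (Real.sqrt ((t : ℝ) + 2) * Real.log ((t : ℝ) + 2))) • (v t - x t))
    (hyup : ∀ t : ℕ,
      y (t + 1) = y t + (2 / (Real.sqrt ((t : ℝ) + 2) * Real.log ((t : ℝ) + 2))) • (w t - y t)) :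
    Filter.Tendsto (fun t : ℕ => ‖x t - y t‖) Filter.atTop (nhds 0) ∧
    ∀ p : EuclideanSpace ℝ (Fin n) × EuclideanSpace ℝ (Fin n),
      MapClusterPt p Filter.atTop (fun t : ℕ => (x t, y t)) →
        p.1 = p.2 ∧ p.1 ∈ P ∩ Q ∧ ∀ z ∈ P ∩ Q, f p.1 ≤ f z := by
  classical
  have hcast : ∀ t : ℕ, ((t+1 : ℕ):ℝ) + 2 = (t:ℝ) + 3 := by intro t; push_cast; ring
  have hlampos : ∀ t : ℕ, 0 < Real.log ((t:ℝ)+2) := by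
    intro t
    have h0 : (0:ℝ) ≤ (t:ℝ) := Nat.cast_nonneg t
    exact Real.log_pos (by linarith)
  have hsqrtpos : ∀ t : ℕ, 0 < Real.sqrt ((t:ℝ)+2) := fun t => Real.sqrt_pos.mpr (by positivity)
  have hgampos : ∀ t : ℕ, 0 < 2 / (Real.sqrt ((t:ℝ)+2) * Real.log ((t:ℝ)+2)) :=
    fun t => div_pos two_pos (mul_pos (hsqrtpos t) (hlampos t))
  have hlammono : ∀ t : ℕ, Real.log ((t:ℝ)+2) ≤ Real.log (((t+1:ℕ):ℝ)+2) := by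
    intro t
    rw [hcast t]
    exact Real.log_le_log (by positivity) (by linarith)
  -- uniform bound on the compact sets
  obtain ⟨RP, hRPb⟩ := isBounded_iff_forall_norm_le.mp hPcomp.isBounded
  obtain ⟨RQ, hRQb⟩ := isBounded_iff_forall_norm_le.mp hQcomp.isBounded
  obtain ⟨p0, hp0⟩ := hPne
  have hRP : ∀ p ∈ P, ‖p‖ ≤ max RP RQ := fun p hp => le_trans (hRPb p hp) (le_max_left _ _)
  have hRQ : ∀ p ∈ Q, ‖p‖ ≤ max RP RQ := fun p hp => le_trans (hRQb p hp) (le_max_right _ _)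
  set R := max RP RQ with hRdef
  have hR0 : 0 ≤ R := le_trans (norm_nonneg p0) (hRP p0 hp0)
  have hsub : ∀ p q : EuclideanSpace ℝ (Fin n), ‖p‖ ≤ R → ‖q‖ ≤ R → ‖p - q‖^2 ≤ 4*R^2 := by
    intro p q hp hq
    have h1 : ‖p - q‖ ≤ 2*R := le_trans (norm_sub_le p q) (by linarith)
    nlinarith [norm_nonneg (p - q)]
  -- continuity of f and bound on the midpoint set
  have hfc : Continuous f := continuous_iff_continuousAt.mpr
    (fun p => (hdiff p).hasFDerivAt.differentiableAt.continuousAt)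
  have hKcomp : IsCompact
      ((fun pq : EuclideanSpace ℝ (Fin n) × EuclideanSpace ℝ (Fin n) =>
        (2:ℝ)⁻¹ • (pq.1 + pq.2)) '' (P ×ˢ Q)) :=
    (hPcomp.prod hQcomp).image (by fun_prop)
  obtain ⟨Bf, hBf⟩ := hKcomp.exists_bound_of_continuousOn hfc.continuousOn
  have hfm : ∀ t, |f ((2:ℝ)⁻¹ • (x t + y t))| ≤ Bf := by
    intro t
    have := hBf _ ⟨(x t, y t), Set.mk_mem_prod (hxP t) (hyQ t), rfl⟩
    rwa [Real.norm_eq_abs] at this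
  have hfz : ∀ z, z ∈ P ∩ Q → |f z| ≤ Bf := by
    intro z hz
    have := hBf _ ⟨(z, z), Set.mk_mem_prod hz.1 hz.2, show (2:ℝ)⁻¹ • (z + z) = z by module⟩
    rwa [Real.norm_eq_abs] at this
  -- one-step recursion
  have hstep : ∀ z, z ∈ P ∩ Q → ∀ t : ℕ,
      2*(f ((2:ℝ)⁻¹ • (x (t+1) + y (t+1))) - f z)
        + Real.log (((t+1:ℕ):ℝ)+2)/4 * ‖x (t+1) - y (t+1)‖^2
      ≤ (1 - 2 / (Real.sqrt ((t:ℝ)+2) * Real.log ((t:ℝ)+2)))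
          * (2*(f ((2:ℝ)⁻¹ • (x t + y t)) - f z)
            + Real.log ((t:ℝ)+2)/4 * ‖x t - y t‖^2)
        + ((2 / (Real.sqrt ((t:ℝ)+2) * Real.log ((t:ℝ)+2)))^2
            * (L + Real.log ((t:ℝ)+2))/2*(8*R^2)
          + (Real.log (((t+1:ℕ):ℝ)+2) - Real.log ((t:ℝ)+2))/4*(4*R^2)) := by
    intro z hz t
    have hres := scg_step hL (hlampos t) (hlammono t) (hgampos t) (hxup t) (hyup t)
      (hsmooth ((2:ℝ)⁻¹ • (x t + y t)) ((2:ℝ)⁻¹ • (x (t+1) + y (t+1))))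
      ((hv t).2 z hz.1) ((hw t).2 z hz.2)
      (grad_convex_ineq _ z hconv (hdiff _))
      (hsub _ _ (hRP _ (hv t).1) (hRP _ (hxP t)))
      (hsub _ _ (hRQ _ (hw t).1) (hRQ _ (hyQ t)))
      (hsub _ _ (hRP _ (hxP (t+1))) (hRQ _ (hyQ (t+1))))
    linarith
  -- the step-size sequence tends to 0
  have hA : Tendsto (fun t : ℕ => 2 / (Real.sqrt ((t:ℝ)+2) * Real.log ((t:ℝ)+2)))
      atTop (𝓝 0) := by
    have h1 := tendsto_two_div_sqrt'.mul tendsto_lam'.inv_tendsto_atTop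
    simp only [zero_mul] at h1
    refine h1.congr (fun t => ?_)
    show 2 / Real.sqrt ((t:ℝ)+2) * ((fun t : ℕ => Real.log ((t:ℝ)+2))⁻¹ t) = _
    rw [Pi.inv_apply, div_eq_mul_inv, div_eq_mul_inv, mul_inv, mul_assoc]
  -- error over step-size tends to 0
  have hB : Tendsto (fun t : ℕ =>
      2 / (Real.sqrt ((t:ℝ)+2) * Real.log ((t:ℝ)+2)) * Real.log ((t:ℝ)+2)) atTop (𝓝 0) := by
    refine tendsto_two_div_sqrt'.congr (fun t => ?_)
    have hl := (hlampos t).ne'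
    have hs := (hsqrtpos t).ne'
    field_simp
  have hC : Tendsto (fun t : ℕ =>
      (Real.log (((t+1:ℕ):ℝ)+2) - Real.log ((t:ℝ)+2))
        / (2 / (Real.sqrt ((t:ℝ)+2) * Real.log ((t:ℝ)+2)))) atTop (𝓝 0) := by
    refine tendsto_of_tendsto_of_tendsto_of_le_of_le tendsto_const_nhds tendsto_logdiv' ?_ ?_
    · intro t
      show (0:ℝ) ≤ (Real.log (((t+1:ℕ):ℝ)+2) - Real.log ((t:ℝ)+2))
          / (2 / (Real.sqrt ((t:ℝ)+2) * Real.log ((t:ℝ)+2)))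
      exact div_nonneg (by linarith [hlammono t]) (hgampos t).le
    · intro t
      show (Real.log (((t+1:ℕ):ℝ)+2) - Real.log ((t:ℝ)+2))
          / (2 / (Real.sqrt ((t:ℝ)+2) * Real.log ((t:ℝ)+2)))
        ≤ Real.log ((t:ℝ)+2) / Real.sqrt ((t:ℝ)+2)
      have hS2 : Real.sqrt ((t:ℝ)+2) * Real.sqrt ((t:ℝ)+2) = (t:ℝ)+2 :=
        Real.mul_self_sqrt (by positivity)
      have hΔ : Real.log (((t+1:ℕ):ℝ)+2) - Real.log ((t:ℝ)+2) ≤ 1/((t:ℝ)+2) := by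
        have h1 : Real.log (((t:ℝ)+3)/((t:ℝ)+2)) ≤ ((t:ℝ)+3)/((t:ℝ)+2) - 1 :=
          Real.log_le_sub_one_of_pos (by positivity)
        have h2 : Real.log (((t:ℝ)+3)/((t:ℝ)+2))
            = Real.log ((t:ℝ)+3) - Real.log ((t:ℝ)+2) :=
          Real.log_div (by positivity) (by positivity)
        have h3 : ((t:ℝ)+3)/((t:ℝ)+2) - 1 = 1/((t:ℝ)+2) := by
          rw [div_sub_one (by positivity : ((t:ℝ)+2) ≠ 0)]
          congr 1
          ring
        rw [hcast t]
        linarith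
      rw [div_div_eq_mul_div]
      have hstep1 : (Real.log (((t+1:ℕ):ℝ)+2) - Real.log ((t:ℝ)+2))
            * (Real.sqrt ((t:ℝ)+2) * Real.log ((t:ℝ)+2)) / 2
          ≤ (1/((t:ℝ)+2)) * (Real.sqrt ((t:ℝ)+2) * Real.log ((t:ℝ)+2)) / 2 := by
        gcongr
        exact mul_nonneg (hsqrtpos t).le (hlampos t).le
      have hstep2 : (1/((t:ℝ)+2)) * (Real.sqrt ((t:ℝ)+2) * Real.log ((t:ℝ)+2)) / 2
          ≤ Real.log ((t:ℝ)+2) / Real.sqrt ((t:ℝ)+2) := by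
        rw [le_div_iff₀ (hsqrtpos t)]
        have hT : ((t:ℝ)+2) ≠ 0 := by positivity
        have he2 : (1/((t:ℝ)+2)) * (Real.sqrt ((t:ℝ)+2) * Real.log ((t:ℝ)+2)) / 2
              * Real.sqrt ((t:ℝ)+2)
            = (Real.sqrt ((t:ℝ)+2) * Real.sqrt ((t:ℝ)+2)) * Real.log ((t:ℝ)+2)
              / (2*((t:ℝ)+2)) := by
          field_simp
        rw [he2, hS2]
        have he3 : ((t:ℝ)+2) * Real.log ((t:ℝ)+2) / (2*((t:ℝ)+2))
            = Real.log ((t:ℝ)+2)/2 := by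
          field_simp
        rw [he3]
        linarith [hlampos t]
      linarith
  -- the full error term over gamma tends to zero
  have herr : Tendsto (fun t : ℕ =>
      (2 / (Real.sqrt ((t:ℝ)+2) * Real.log ((t:ℝ)+2)) * L
        + 2 / (Real.sqrt ((t:ℝ)+2) * Real.log ((t:ℝ)+2)) * Real.log ((t:ℝ)+2)) * (4*R^2)
      + ((Real.log (((t+1:ℕ):ℝ)+2) - Real.log ((t:ℝ)+2))
          / (2 / (Real.sqrt ((t:ℝ)+2) * Real.log ((t:ℝ)+2)))) * R^2) atTop (𝓝 0) := by
    have h := (((hA.mul_const L).add hB).mul_const (4*R^2)).add (hC.mul_const (R^2))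
    simpa using h
  -- key convergence of the merit function
  have hkey : ∀ z, z ∈ P ∩ Q → ∀ ε > 0, ∀ᶠ t in atTop,
      2*(f ((2:ℝ)⁻¹ • (x t + y t)) - f z)
        + Real.log ((t:ℝ)+2)/4 * ‖x t - y t‖^2 ≤ ε := by
    intro z hz
    refine seq_eventually_le
      (fun t => 2*(f ((2:ℝ)⁻¹ • (x t + y t)) - f z)
        + Real.log ((t:ℝ)+2)/4 * ‖x t - y t‖^2)
      (fun t => 2 / (Real.sqrt ((t:ℝ)+2) * Real.log ((t:ℝ)+2)))
      (fun t => (2 / (Real.sqrt ((t:ℝ)+2) * Real.log ((t:ℝ)+2)))^2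
            * (L + Real.log ((t:ℝ)+2))/2*(8*R^2)
        + (Real.log (((t+1:ℕ):ℝ)+2) - Real.log ((t:ℝ)+2))/4*(4*R^2))
      (4*Bf) ?_ (fun t => hstep z hz t) hgampos ?_ gam_div' ?_
    · intro t
      have h1 := abs_le.mp (hfm t)
      have h2 := abs_le.mp (hfz z hz)
      have h3 : 0 ≤ Real.log ((t:ℝ)+2)/4 * ‖x t - y t‖^2 :=
        mul_nonneg (by linarith [hlampos t]) (sq_nonneg _)
      linarith [h1.1, h2.2]
    · filter_upwards [hA.eventually_lt_const one_pos] with t ht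
      exact ht.le
    · intro ε hε
      filter_upwards [herr.eventually_lt_const hε] with t ht
      have hgne : (2 / (Real.sqrt ((t:ℝ)+2) * Real.log ((t:ℝ)+2))) ≠ 0 := (hgampos t).ne'
      have hl : Real.log ((t:ℝ)+2) ≠ 0 := (hlampos t).ne'
      have hs : Real.sqrt ((t:ℝ)+2) ≠ 0 := (hsqrtpos t).ne'
      have heq : (2 / (Real.sqrt ((t:ℝ)+2) * Real.log ((t:ℝ)+2)))^2
            * (L + Real.log ((t:ℝ)+2))/2*(8*R^2)
          + (Real.log (((t+1:ℕ):ℝ)+2) - Real.log ((t:ℝ)+2))/4*(4*R^2)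
          = (2 / (Real.sqrt ((t:ℝ)+2) * Real.log ((t:ℝ)+2)))
            * ((2 / (Real.sqrt ((t:ℝ)+2) * Real.log ((t:ℝ)+2)) * L
              + 2 / (Real.sqrt ((t:ℝ)+2) * Real.log ((t:ℝ)+2)) * Real.log ((t:ℝ)+2)) * (4*R^2)
            + ((Real.log (((t+1:ℕ):ℝ)+2) - Real.log ((t:ℝ)+2))
                / (2 / (Real.sqrt ((t:ℝ)+2) * Real.log ((t:ℝ)+2)))) * R^2) := by
        field_simp
        ring
      rw [heq]
      calc _ ≤ (2 / (Real.sqrt ((t:ℝ)+2) * Real.log ((t:ℝ)+2))) * ε :=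
            mul_le_mul_of_nonneg_left ht.le (hgampos t).le
        _ = ε * (2 / (Real.sqrt ((t:ℝ)+2) * Real.log ((t:ℝ)+2))) := mul_comm _ _
  -- first conclusion
  obtain ⟨z0, hz0⟩ := hPQ
  have hone := hkey z0 hz0 1 one_pos
  have hnd : Tendsto (fun t : ℕ => ‖x t - y t‖^2) atTop (𝓝 0) := by
    have hbnd : Tendsto (fun t : ℕ => (4*(1+4*Bf)) / Real.log ((t:ℝ)+2)) atTop (𝓝 0) := by
      have h := tendsto_lam'.inv_tendsto_atTop.const_mul (4*(1+4*Bf))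
      simp only [mul_zero] at h
      exact h.congr (fun t => by rw [Pi.inv_apply, div_eq_mul_inv])
    refine tendsto_of_tendsto_of_tendsto_of_le_of_le' tendsto_const_nhds hbnd
      (Eventually.of_forall (fun t => sq_nonneg _)) ?_
    filter_upwards [hone] with t ht
    have h1 := abs_le.mp (hfm t)
    have h2 := abs_le.mp (hfz z0 hz0)
    rw [le_div_iff₀ (hlampos t)]
    nlinarith [h1.1, h2.2]
  have hndnorm : Tendsto (fun t : ℕ => ‖x t - y t‖) atTop (𝓝 0) := by
    have h := (Real.continuous_sqrt.tendsto' 0 0 (by simp)).comp hnd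
    exact h.congr (fun t => Real.sqrt_sq (norm_nonneg _))
  refine ⟨hndnorm, ?_⟩
  -- second conclusion
  intro p hp
  obtain ⟨φ, hφ, hφt⟩ := TopologicalSpace.FirstCountableTopology.tendsto_subseq hp
  have hx1 : Tendsto (fun k => x (φ k)) atTop (𝓝 p.1) :=
    ((continuous_fst.tendsto p).comp hφt).congr (fun k => rfl)
  have hy1 : Tendsto (fun k => y (φ k)) atTop (𝓝 p.2) :=
    ((continuous_snd.tendsto p).comp hφt).congr (fun k => rfl)
  have hpp : p.1 = p.2 := by
    have hA' : Tendsto (fun k => ‖x (φ k) - y (φ k)‖) atTop (𝓝 ‖p.1 - p.2‖) :=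
      (hx1.sub hy1).norm
    have hB' : Tendsto (fun k => ‖x (φ k) - y (φ k)‖) atTop (𝓝 0) :=
      hndnorm.comp hφ.tendsto_atTop
    exact sub_eq_zero.mp (norm_eq_zero.mp (tendsto_nhds_unique hA' hB'))
  have hP1 : p.1 ∈ P :=
    hPcomp.isClosed.mem_of_tendsto hx1 (Eventually.of_forall (fun k => hxP (φ k)))
  have hQ1 : p.1 ∈ Q := by
    rw [hpp]
    exact hQcomp.isClosed.mem_of_tendsto hy1 (Eventually.of_forall (fun k => hyQ (φ k)))
  refine ⟨hpp, ⟨hP1, hQ1⟩, ?_⟩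
  intro z hz
  have hm1 : Tendsto (fun k => (2:ℝ)⁻¹ • (x (φ k) + y (φ k))) atTop (𝓝 p.1) := by
    have h := (hx1.add hy1).const_smul (2:ℝ)⁻¹
    have he : (2:ℝ)⁻¹ • (p.1 + p.2) = p.1 := by rw [← hpp]; module
    rwa [he] at h
  have hfm1 : Tendsto (fun k => f ((2:ℝ)⁻¹ • (x (φ k) + y (φ k)))) atTop (𝓝 (f p.1)) :=
    (hfc.tendsto p.1).comp hm1
  by_contra hlt
  push_neg at hlt
  set ε := (f p.1 - f z)/2 with hεdef
  have hε : 0 < ε := by simp only [hεdef]; linarith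
  have hev := hkey z hz (2*ε) (by linarith)
  have hev2 : ∀ᶠ t in atTop, f ((2:ℝ)⁻¹ • (x t + y t)) ≤ f z + ε := by
    filter_upwards [hev] with t ht
    have h3 : 0 ≤ Real.log ((t:ℝ)+2)/4 * ‖x t - y t‖^2 :=
      mul_nonneg (by linarith [hlampos t]) (sq_nonneg _)
    linarith
  have := le_of_tendsto hfm1 (hφ.tendsto_atTop.eventually hev2)
  simp only [hεdef] at this
  linarith
end

section
/- For every real t ≥ 0, √(t+2)·ln(t+2) − 1 ≤ √(t+1)·ln(t+1). -/
lemma two_log_le (s : ℝ) (hs : 1 ≤ s) : 2 * Real.log s ≤ s - 1/s := by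
  have hmono : MonotoneOn (fun x : ℝ => x - x⁻¹ - 2 * Real.log x) (Set.Ici 1) := by
    have hder : ∀ x ∈ interior (Set.Ici (1:ℝ)),
        HasDerivAt (fun x : ℝ => x - x⁻¹ - 2 * Real.log x) (1 - (-(x^2)⁻¹) - 2 * x⁻¹) x := by
      intro x hx
      simp only [interior_Ici, Set.mem_Ioi] at hx
      have hx0 : x ≠ 0 := by positivity
      exact ((hasDerivAt_id x).sub (hasDerivAt_inv hx0)).sub
        ((Real.hasDerivAt_log hx0).const_mul 2)
    apply monotoneOn_of_deriv_nonneg (convex_Ici 1)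
    · apply ContinuousOn.sub
      · exact continuousOn_id.sub (continuousOn_inv₀.mono (fun x hx => by
          simp only [Set.mem_Ici] at hx
          simp only [Set.mem_compl_iff, Set.mem_singleton_iff]; positivity))
      · exact continuousOn_const.mul (Real.continuousOn_log.mono (fun x hx => by
          simp only [Set.mem_Ici] at hx
          simp only [Set.mem_compl_iff, Set.mem_singleton_iff]; positivity))
    · exact fun x hx => (hder x hx).differentiableAt.differentiableWithinAt
    · intro x hx
      rw [(hder x hx).deriv]
      simp only [interior_Ici, Set.mem_Ioi] at hx
      have hx0 : (0:ℝ) < x := by linarith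
      have h1 : (1 - x⁻¹)^2 ≥ 0 := sq_nonneg _
      have h3 : (x^2)⁻¹ = x⁻¹ * x⁻¹ := by rw [sq, mul_inv]
      nlinarith [h1, h3]
  have := hmono (by simp : (1:ℝ) ∈ Set.Ici 1) (Set.mem_Ici.mpr hs) hs
  simp only [Real.log_one, one_div] at this ⊢
  simp at this
  linarith

lemma log_le_sqrt_sub (u : ℝ) (hu : 1 ≤ u) :
    Real.log u ≤ Real.sqrt u - 1 / Real.sqrt u := by
  have hs : 1 ≤ Real.sqrt u := by
    rw [show (1:ℝ) = Real.sqrt 1 by simp]; exact Real.sqrt_le_sqrt hu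
  have h := two_log_le (Real.sqrt u) hs
  have hlog : Real.log u = 2 * Real.log (Real.sqrt u) := by
    rw [Real.log_sqrt (by linarith)]; ring
  linarith [hlog ▸ h]

/-- For every real `t ≥ 0`, `√(t+2)·ln(t+2) − 1 ≤ √(t+1)·ln(t+1)`. -/
theorem sqrt_log_succ_le (t : ℝ) (ht : 0 ≤ t) :
    Real.sqrt (t + 2) * Real.log (t + 2) - 1 ≤ Real.sqrt (t + 1) * Real.log (t + 1) := by
  obtain ⟨a, ha⟩ : ∃ a : ℝ, a = t + 1 := ⟨_, rfl⟩
  obtain ⟨b, hb⟩ : ∃ b : ℝ, b = t + 2 := ⟨_, rfl⟩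
  rw [← ha, ← hb]
  have ha1 : 1 ≤ a := by rw [ha]; linarith
  have hb1 : 1 ≤ b := by rw [hb]; linarith
  have hba : b = a + 1 := by rw [ha, hb]; ring
  clear ha hb ht
  obtain ⟨sa, hsa⟩ : ∃ s : ℝ, s = Real.sqrt a := ⟨_, rfl⟩
  obtain ⟨sb, hsb⟩ : ∃ s : ℝ, s = Real.sqrt b := ⟨_, rfl⟩
  rw [← hsa, ← hsb]
  have hsa1 : 1 ≤ sa := by
    rw [hsa, show (1:ℝ) = Real.sqrt 1 by simp]; exact Real.sqrt_le_sqrt ha1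
  have hsb1 : 1 ≤ sb := by
    rw [hsb, show (1:ℝ) = Real.sqrt 1 by simp]; exact Real.sqrt_le_sqrt hb1
  have hsa2 : sa ^ 2 = a := by rw [hsa]; exact Real.sq_sqrt (by linarith)
  have hsb2 : sb ^ 2 = b := by rw [hsb]; exact Real.sq_sqrt (by linarith)
  have hab : sa ≤ sb := by rw [hsa, hsb]; exact Real.sqrt_le_sqrt (by linarith)
  have hsapos : (0:ℝ) < sa := by linarith
  have hsbpos : (0:ℝ) < sb := by linarith
  have hba1 : 1 ≤ b / a := (one_le_div (by linarith)).mpr (by linarith)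
  have hsq : Real.sqrt (b / a) = sb / sa := by
    rw [hsa, hsb]; exact Real.sqrt_div (by linarith) _
  have h1 : Real.log b - Real.log a ≤ 1 / (sa * sb) := by
    have h := log_le_sqrt_sub (b / a) hba1
    rw [Real.log_div (by linarith) (by linarith), hsq] at h
    have h2 : sb / sa - 1 / (sb / sa) = 1 / (sa * sb) := by
      field_simp
      nlinarith
    linarith [h2 ▸ h]
  have h2 : Real.log a ≤ sa - 1 / sa := by
    have := log_le_sqrt_sub a ha1
    rwa [← hsa] at this
  have hloga : 0 ≤ Real.log a := Real.log_nonneg ha1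
  have hkey : (sb - sa) * (sb + sa) = 1 := by nlinarith
  have h3 : sb * Real.log b ≤ sb * Real.log a + 1 / sa := by
    have h := mul_le_mul_of_nonneg_left h1 (le_of_lt hsbpos)
    have he : sb * (1 / (sa * sb)) = 1 / sa := by field_simp
    nlinarith
  have h4 : (sb - sa) * Real.log a ≤ 1 - 1 / sa := by
    have hd : sb - sa ≤ 1 / (2 * sa) := by
      rw [le_div_iff₀ (by positivity)]
      nlinarith [hkey, hab, hsapos]
    have hm := mul_le_mul hd h2 hloga (by positivity)
    have he : 1 / (2 * sa) * (sa - 1 / sa) = 1 / 2 - 1 / (2 * sa ^ 2) := by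
      field_simp
    have hf : 1 / 2 - 1 / (2 * sa ^ 2) ≤ 1 - 1 / sa := by
      have hg : 1 / sa - 1 / (2 * sa ^ 2) ≤ 1 / 2 := by
        rw [div_sub_div _ _ (ne_of_gt hsapos) (by positivity),
          div_le_div_iff₀ (by positivity) (by norm_num)]
        nlinarith [mul_nonneg hsapos.le (sq_nonneg (sa - 1))]
      linarith
    nlinarith
  nlinarith
end
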